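/- If a family F of subsets of {1,...,n} has size |F| = x + C(n, floor(n/2)) with x ≥ 0, then F contains at least x · (floor(n/2) + 1) pairs (A,B) with A ⊊ B. -/

import Mathlib

open Finset Nat

variable {n : ℕ}

/-- A matching from level `j` down to level `j-1`, for `j` above the middle. -/
lemma exists_down (n j : ℕ) (hj : n < 2 * j) :
    ∃ g : Finset (Fin n) → Finset (Fin n),
      (∀ A : Finset (Fin n), A.card = j → g A ⊂ A ∧ (g A).card + 1 = j) ∧
      (∀ A B : Finset (Fin n), A.card = j → B.card = j → g A = g B → A = B) := by
  classical
  have hall : ∀ s : Finset {A : Finset (Fin n) // A.card = j},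
      s.card ≤ (s.biUnion fun A => A.1.image (fun x => A.1.erase x)).card := by
    intro s
    set 𝒜 : Finset (Finset (Fin n)) := s.image Subtype.val with h𝒜
    have hsized : (𝒜 : Set (Finset (Fin n))).Sized j := by
      intro u hu
      simp only [h𝒜, coe_image, Set.mem_image, mem_coe] at hu
      obtain ⟨a, _, rfl⟩ := hu
      exact a.2
    have hcard𝒜 : s.card = 𝒜.card :=
      (card_image_of_injective s Subtype.val_injective).symm
    have hbi : s.biUnion (fun A => A.1.image (fun x => A.1.erase x)) = Finset.shadow 𝒜 := by
      rw [Finset.shadow, sup_eq_biUnion, h𝒜, image_biUnion]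
    have hlym := Finset.card_mul_le_card_shadow_mul hsized
    rw [Fintype.card_fin] at hlym
    have hj0 : 0 < j := by omega
    have h1 : n - j + 1 ≤ j := by omega
    have h2 : 𝒜.card * j ≤ (Finset.shadow 𝒜).card * j :=
      hlym.trans (Nat.mul_le_mul_left _ h1)
    rw [hbi, hcard𝒜]
    exact Nat.le_of_mul_le_mul_right h2 hj0
  obtain ⟨f, hfinj, hf⟩ := (Finset.all_card_le_biUnion_card_iff_exists_injective _).1 hall
  refine ⟨fun A => if h : A.card = j then f ⟨A, h⟩ else ∅, fun A hA => ?_, fun A B hA hB h => ?_⟩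
  · simp only [hA, dif_pos]
    obtain ⟨x, hx, hfx⟩ := mem_image.1 (hf ⟨A, hA⟩)
    rw [← hfx]
    exact ⟨Finset.erase_ssubset hx, by rw [card_erase_of_mem hx, hA]; omega⟩
  · simp only [hA, hB, dif_pos] at h
    exact congrArg Subtype.val (hfinj h)

/-- A matching from level `j` up to level `j+1`, for `j` below the middle. -/
lemma exists_up (n j : ℕ) (hj : 2 * j < n) :
    ∃ u : Finset (Fin n) → Finset (Fin n),
      (∀ A : Finset (Fin n), A.card = j → A ⊂ u A ∧ (u A).card = j + 1) ∧
      (∀ A B : Finset (Fin n), A.card = j → B.card = j → u A = u B → A = B) := by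
  classical
  obtain ⟨g, hg, hginj⟩ := exists_down n (n - j) (by omega)
  have hcompl : ∀ A : Finset (Fin n), A.card = j → Aᶜ.card = n - j := by
    intro A hA
    rw [Finset.card_compl, Fintype.card_fin, hA]
  refine ⟨fun A => (g Aᶜ)ᶜ, fun A hA => ?_, fun A B hA hB h => ?_⟩
  · obtain ⟨h1, h2⟩ := hg Aᶜ (hcompl A hA)
    constructor
    · have := compl_lt_compl_iff_lt.2 (show g Aᶜ < Aᶜ from h1)
      rwa [compl_compl] at this
    · rw [Finset.card_compl, Fintype.card_fin]
      have hle : (g Aᶜ).card ≤ n := by simpa using Finset.card_le_univ (g Aᶜ)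
      omega
  · have : g Aᶜ = g Bᶜ := by
      have := congrArg (·ᶜ) h
      simpa [compl_compl] using this
    have := hginj Aᶜ Bᶜ (hcompl A hA) (hcompl B hB) this
    have := congrArg (·ᶜ) this
    simpa [compl_compl] using this

/-- The one-step function toward the middle level, and the chain decomposition map `rep`. -/
lemma exists_pi (n : ℕ) :
    ∃ π : Finset (Fin n) → Finset (Fin n),
      (∀ A : Finset (Fin n), A.card < n / 2 → A ⊂ π A ∧ (π A).card = A.card + 1) ∧
      (∀ A : Finset (Fin n), n / 2 < A.card → π A ⊂ A ∧ (π A).card + 1 = A.card) ∧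
      (∀ A : Finset (Fin n), A.card = n / 2 → π A = A) ∧
      (∀ A B : Finset (Fin n), A.card = B.card → π A = π B → A = B) := by
  classical
  have hU : ∀ j : ℕ, ∃ u : Finset (Fin n) → Finset (Fin n), 2 * j < n →
      ((∀ A : Finset (Fin n), A.card = j → A ⊂ u A ∧ (u A).card = j + 1) ∧
      (∀ A B : Finset (Fin n), A.card = j → B.card = j → u A = u B → A = B)) := by
    intro j
    by_cases h : 2 * j < n
    · obtain ⟨u, h1, h2⟩ := exists_up n j h
      exact ⟨u, fun _ => ⟨h1, h2⟩⟩
    · exact ⟨id, fun hc => absurd hc h⟩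
  have hD : ∀ j : ℕ, ∃ g : Finset (Fin n) → Finset (Fin n), n < 2 * j →
      ((∀ A : Finset (Fin n), A.card = j → g A ⊂ A ∧ (g A).card + 1 = j) ∧
      (∀ A B : Finset (Fin n), A.card = j → B.card = j → g A = g B → A = B)) := by
    intro j
    by_cases h : n < 2 * j
    · obtain ⟨g, h1, h2⟩ := exists_down n j h
      exact ⟨g, fun _ => ⟨h1, h2⟩⟩
    · exact ⟨id, fun hc => absurd hc h⟩
  choose U hUs using hU
  choose D hDs using hD
  refine ⟨fun A => if A.card < n / 2 then U A.card A else
    if n / 2 < A.card then D A.card A else A, fun A hA => ?_, fun A hA => ?_, fun A hA => ?_,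
    fun A B hAB h => ?_⟩
  · simp only [hA, if_pos]
    exact (hUs A.card (by omega)).1 A rfl
  · have h1 : ¬ A.card < n / 2 := by omega
    simp only [hA, h1, if_neg, if_pos, not_false_iff]
    exact (hDs A.card (by omega)).1 A rfl
  · have h1 : ¬ A.card < n / 2 := by omega
    have h2 : ¬ n / 2 < A.card := by omega
    simp only [h1, h2, if_neg, not_false_iff, if_false]
  · by_cases c1 : A.card < n / 2
    · have hc : 2 * A.card < n := by omega
      simp only [c1, if_pos, ← hAB] at h
      exact (hUs A.card hc).2 A B rfl hAB.symm h
    · by_cases c2 : n / 2 < A.card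
      · have hc : n < 2 * A.card := by omega
        have c1' : ¬ B.card < n / 2 := by omega
        have c2' : n / 2 < B.card := by omega
        simp only [c1, c2, c1', c2', if_pos, if_neg, not_false_iff, ← hAB] at h
        exact (hDs A.card hc).2 A B rfl hAB.symm h
      · have c1' : ¬ B.card < n / 2 := by omega
        have c2' : ¬ n / 2 < B.card := by omega
        simpa [c1, c2, c1', c2'] using h

/-- A decomposition of the Boolean lattice into chains indexed by middle-level sets. -/
lemma exists_rep (n : ℕ) :
    ∃ rep : Finset (Fin n) → Finset (Fin n),
      (∀ A B : Finset (Fin n), rep A = rep B → A ⊆ B ∨ B ⊆ A) ∧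
      (∀ A : Finset (Fin n), (rep A).card = n / 2) := by
  classical
  obtain ⟨π, hup, hdown, hmid, hinj⟩ := exists_pi n
  set m := n / 2
  -- iterating upward
  have L1 : ∀ (k : ℕ) (A : Finset (Fin n)), A.card + k ≤ m →
      A ⊆ π^[k] A ∧ (π^[k] A).card = A.card + k := by
    intro k
    induction k with
    | zero => intro A _; simp
    | succ k ih =>
      intro A hA
      obtain ⟨h1, h2⟩ := ih A (by omega)
      rw [Function.iterate_succ_apply']
      have hc : (π^[k] A).card < m := by omega
      obtain ⟨h3, h4⟩ := hup _ hc
      exact ⟨h1.trans h3.subset, by omega⟩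
  -- iterating downward
  have L2 : ∀ (k : ℕ) (A : Finset (Fin n)), m + k ≤ A.card →
      π^[k] A ⊆ A ∧ (π^[k] A).card + k = A.card := by
    intro k
    induction k with
    | zero => intro A _; simp
    | succ k ih =>
      intro A hA
      obtain ⟨h1, h2⟩ := ih A (by omega)
      rw [Function.iterate_succ_apply']
      have hc : m < (π^[k] A).card := by omega
      obtain ⟨h3, h4⟩ := hdown _ hc
      exact ⟨h3.subset.trans h1, by omega⟩
  -- π preserves equality of cardinalities
  have cardπ : ∀ A B : Finset (Fin n), A.card = B.card → (π A).card = (π B).card := by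
    intro A B h
    rcases lt_trichotomy A.card m with hc | hc | hc
    · have := (hup A hc).2; have := (hup B (h ▸ hc)).2; omega
    · rw [hmid A hc, hmid B (h ▸ hc), h]
    · have := (hdown A hc).2; have := (hdown B (h ▸ hc)).2; omega
  -- iterates are injective on levels
  have L5 : ∀ (k : ℕ) (A B : Finset (Fin n)), A.card = B.card → π^[k] A = π^[k] B → A = B := by
    intro k
    induction k with
    | zero => intro A B _ h; simpa using h
    | succ k ih =>
      intro A B hc h
      rw [Function.iterate_succ_apply, Function.iterate_succ_apply] at h
      exact hinj A B hc (ih _ _ (cardπ A B hc) h)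
  refine ⟨fun A => if A.card ≤ m then π^[m - A.card] A else π^[A.card - m] A, fun A B h => ?_,
    fun A => ?_⟩
  · -- chain property
    have key : ∀ A B : Finset (Fin n), A.card ≤ B.card →
        (if A.card ≤ m then π^[m - A.card] A else π^[A.card - m] A) =
        (if B.card ≤ m then π^[m - B.card] B else π^[B.card - m] B) → A ⊆ B := by
      intro A B hab h
      by_cases hBm : B.card ≤ m
      · have hAm : A.card ≤ m := le_trans hab hBm
        simp only [hAm, hBm, if_pos] at h
        have hsplit : m - A.card = (m - B.card) + (B.card - A.card) := by omega
        rw [hsplit, Function.iterate_add_apply] at h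
        have hcard : (π^[B.card - A.card] A).card = B.card :=
          (L1 (B.card - A.card) A (by omega)).2.trans (by omega)
        have := L5 (m - B.card) _ _ (hcard) h
        rw [← this]
        exact (L1 (B.card - A.card) A (by omega)).1
      · by_cases hAm : A.card ≤ m
        · -- A below middle, B above
          simp only [hAm, hBm, if_pos, if_neg, not_false_iff] at h
          calc A ⊆ π^[m - A.card] A := (L1 _ A (by omega)).1
            _ = π^[B.card - m] B := h
            _ ⊆ B := (L2 _ B (by omega)).1
        · simp only [hAm, hBm, if_neg, not_false_iff] at h
          have hsplit : B.card - m = (A.card - m) + (B.card - A.card) := by omega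
          rw [hsplit, Function.iterate_add_apply] at h
          have hcard : (π^[B.card - A.card] B).card = A.card := by
            have := (L2 (B.card - A.card) B (by omega)).2; omega
          have := L5 (A.card - m) _ _ (hcard.symm) h
          rw [this]
          exact (L2 (B.card - A.card) B (by omega)).1
    rcases le_total A.card B.card with hab | hab
    · exact Or.inl (key A B hab h)
    · exact Or.inr (key B A hab h.symm)
  · by_cases hAm : A.card ≤ m
    · simp only [hAm, if_pos]
      have := (L1 (m - A.card) A (by omega)).2; omega
    · simp only [hAm, if_neg, not_false_iff]
      have := (L2 (A.card - m) A (by omega)).2; omega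

/-- Counting lemma: a family exceeds the number of chains by at most the number of
comparable pairs lying in a common chain. -/
lemma chain_count' (n : ℕ) (r : Finset (Fin n) → Finset (Fin n))
    (hchain : ∀ A B : Finset (Fin n), r A = r B → A ⊆ B ∨ B ⊆ A)
    (hcard : ∀ A : Finset (Fin n), (r A).card = n / 2)
    (F : Finset (Finset (Fin n))) :
    F.card ≤ n.choose (n / 2) +
      ((F ×ˢ F).filter fun p => p.1 ⊂ p.2 ∧ r p.1 = r p.2).card := by
  classical
  set P := (F ×ˢ F).filter fun p => p.1 ⊂ p.2 ∧ r p.1 = r p.2 with hP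
  have h1 : F.card = ∑ R ∈ F.image r, (F.filter fun A => r A = R).card :=
    card_eq_sum_card_fiberwise (fun A hA => mem_image_of_mem r hA)
  have h2 : P.card = ∑ R ∈ F.image r, (P.filter fun p => r p.1 = R).card :=
    card_eq_sum_card_fiberwise (fun p hp => by
      rw [hP, mem_coe, mem_filter, mem_product] at hp
      exact mem_image_of_mem r hp.1.1)
  have himage : (F.image r).card ≤ n.choose (n / 2) := by
    have : F.image r ⊆ Finset.powersetCard (n / 2) Finset.univ := by
      intro R hR
      obtain ⟨A, _, rfl⟩ := mem_image.1 hR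
      exact Finset.mem_powersetCard_univ.2 (hcard A)
    calc (F.image r).card ≤ _ := card_le_card this
      _ = n.choose (n / 2) := by rw [Finset.card_powersetCard, Finset.card_univ, Fintype.card_fin]
  have hpoint : ∀ R ∈ F.image r,
      (F.filter fun A => r A = R).card ≤ 1 + (P.filter fun p => r p.1 = R).card := by
    intro R hR
    set T := F.filter fun A => r A = R with hT
    obtain ⟨A0, hA0F, hA0r⟩ := mem_image.1 hR
    have hTne : T.Nonempty := ⟨A0, mem_filter.2 ⟨hA0F, hA0r⟩⟩
    obtain ⟨M, hMT, hMmax⟩ := Finset.exists_max_image T Finset.card hTne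
    have hMF : M ∈ F := (mem_filter.1 hMT).1
    have hMr : r M = R := (mem_filter.1 hMT).2
    have hsub : ∀ B ∈ T, B ⊆ M := by
      intro B hB
      obtain ⟨hBF, hBr⟩ := mem_filter.1 hB
      rcases hchain B M (by rw [hBr, hMr]) with h | h
      · exact h
      · rw [Finset.eq_of_subset_of_card_le h (hMmax B hB)]
    have hinj : ∀ B ∈ T.erase M, (B, M) ∈ P.filter fun p => r p.1 = R := by
      intro B hB
      obtain ⟨hBne, hBT⟩ := Finset.mem_erase.1 hB
      obtain ⟨hBF, hBr⟩ := mem_filter.1 hBT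
      refine mem_filter.2 ⟨mem_filter.2 ⟨mem_product.2 ⟨hBF, hMF⟩, ?_, by rw [hBr, hMr]⟩, hBr⟩
      exact (Finset.ssubset_iff_subset_ne).2 ⟨hsub B hBT, hBne⟩
    have hcard2 : (T.erase M).card ≤ (P.filter fun p => r p.1 = R).card := by
      apply Finset.card_le_card_of_injOn (fun B => (B, M)) hinj
      intro a _ b _ h
      exact (Prod.mk.injEq .. ▸ h).1
    have := Finset.card_erase_of_mem hMT
    have hTpos : 0 < T.card := Finset.card_pos.2 hTne
    omega
  calc F.card = _ := h1
    _ ≤ ∑ R ∈ F.image r, (1 + (P.filter fun p => r p.1 = R).card) :=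
      Finset.sum_le_sum hpoint
    _ = (F.image r).card + P.card := by rw [Finset.sum_add_distrib, Finset.sum_const,
      smul_eq_mul, mul_one, h2]
    _ ≤ n.choose (n / 2) + P.card := by omega

/-- Binomial coefficients in the interior are at least `s`. -/
lemma choose_lb : ∀ s k : ℕ, 1 ≤ k → k < s → s ≤ s.choose k := by
  intro s
  induction s with
  | zero => omega
  | succ s ih =>
    intro k hk1 hks
    rcases Nat.eq_or_lt_of_le hk1 with h1 | h1
    · simp [← h1]
    rcases Nat.eq_or_lt_of_le (show k ≤ s by omega) with h2 | h2
    · subst h2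
      rw [Nat.choose_succ_self_right]
    · obtain ⟨k', rfl⟩ : ∃ k', k = k' + 1 := ⟨k - 1, by omega⟩
      rw [Nat.choose_succ_succ]
      simp only [Nat.succ_eq_add_one]
      have := ih (k' + 1) (by omega) h2
      have := Nat.choose_pos (show k' ≤ s by omega)
      omega

/-- Restriction of a permutation to an equivalence between a finset and its image. -/
def permRestrict {n : ℕ} (σ : Equiv.Perm (Fin n)) (X X' : Finset (Fin n))
    (h : X.map σ.toEmbedding = X') : {x // x ∈ X} ≃ {y // y ∈ X'} where
  toFun x := ⟨σ x.1, by subst h; exact Finset.mem_map.2 ⟨x.1, x.2, rfl⟩⟩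
  invFun y := ⟨σ.symm y.1, by
    subst h
    obtain ⟨z, hz, hzy⟩ := Finset.mem_map.1 y.2
    simpa [← hzy] using hz⟩
  left_inv x := by simp
  right_inv y := by simp

lemma map_sdiff_eq {n : ℕ} (σ : Equiv.Perm (Fin n)) {A B A' B' : Finset (Fin n)}
    (h1 : A.map σ.toEmbedding = A') (h2 : B.map σ.toEmbedding = B') :
    (B \ A).map σ.toEmbedding = B' \ A' := by
  classical
  rw [Finset.map_eq_image] at *
  rw [← h1, ← h2, Finset.image_sdiff _ _ σ.toEmbedding.injective]

lemma map_compl_eq {n : ℕ} (σ : Equiv.Perm (Fin n)) {B B' : Finset (Fin n)}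
    (h2 : B.map σ.toEmbedding = B') : Bᶜ.map σ.toEmbedding = B'ᶜ := by
  classical
  rw [Finset.compl_eq_univ_sdiff, Finset.compl_eq_univ_sdiff]
  rw [Finset.map_eq_image] at *
  rw [← h2, Finset.image_sdiff _ _ σ.toEmbedding.injective]
  congr 1
  simpa [Finset.map_eq_image] using Finset.map_univ_equiv σ

/-- The number of permutations carrying the flag `A ⊆ B` onto the flag `(A', B')`. -/
lemma perm_flag_count {n : ℕ} (A B A' B' : Finset (Fin n)) (hAB : A ⊆ B) :
    (Finset.univ.filter fun σ : Equiv.Perm (Fin n) =>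
        A.map σ.toEmbedding = A' ∧ B.map σ.toEmbedding = B').card ≤
      (A.card)! * ((B.card - A.card)! * ((n - B.card)!)) := by
  classical
  set S := Finset.univ.filter fun σ : Equiv.Perm (Fin n) =>
      A.map σ.toEmbedding = A' ∧ B.map σ.toEmbedding = B' with hS
  rcases S.eq_empty_or_nonempty with h | ⟨σ0, hσ0⟩
  · simp [h]
  have hconj : ∀ σ ∈ S, A.map σ.toEmbedding = A' ∧ B.map σ.toEmbedding = B' :=
    fun σ hσ => (Finset.mem_filter.1 hσ).2
  obtain ⟨h0A, h0B⟩ := hconj σ0 hσ0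
  let E1 := {x // x ∈ A} ≃ {y // y ∈ A'}
  let E2 := {x // x ∈ B \ A} ≃ {y // y ∈ B' \ A'}
  let E3 := {x // x ∈ Bᶜ} ≃ {y // y ∈ B'ᶜ}
  let Φ : {σ // σ ∈ S} → E1 × E2 × E3 := fun σs =>
    ⟨permRestrict σs.1 A A' (hconj σs.1 σs.2).1,
     permRestrict σs.1 (B \ A) (B' \ A')
       (map_sdiff_eq σs.1 (hconj σs.1 σs.2).1 (hconj σs.1 σs.2).2),
     permRestrict σs.1 Bᶜ B'ᶜ (map_compl_eq σs.1 (hconj σs.1 σs.2).2)⟩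
  have hΦinj : Function.Injective Φ := by
    intro σs τs h
    have hE1 : (Φ σs).1 = (Φ τs).1 := congrArg Prod.fst h
    have hE2 : (Φ σs).2.1 = (Φ τs).2.1 := congrArg (fun p => p.2.1) h
    have hE3 : (Φ σs).2.2 = (Φ τs).2.2 := congrArg (fun p => p.2.2) h
    apply Subtype.ext
    apply Equiv.ext
    intro x
    by_cases hxB : x ∈ B
    · by_cases hxA : x ∈ A
      · have := congrArg (fun e => ((e ⟨x, hxA⟩ : {y // y ∈ A'}) : Fin n)) hE1
        exact this
      · have hx : x ∈ B \ A := Finset.mem_sdiff.2 ⟨hxB, hxA⟩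
        have := congrArg (fun e => ((e ⟨x, hx⟩ : {y // y ∈ B' \ A'}) : Fin n)) hE2
        exact this
    · have hx : x ∈ Bᶜ := Finset.mem_compl.2 hxB
      have := congrArg (fun e => ((e ⟨x, hx⟩ : {y // y ∈ B'ᶜ}) : Fin n)) hE3
      exact this
  have hcards : Fintype.card (E1 × E2 × E3) =
      (A.card)! * ((B.card - A.card)! * ((n - B.card)!)) := by
    rw [Fintype.card_prod, Fintype.card_prod]
    rw [Fintype.card_equiv (permRestrict σ0 A A' h0A),
      Fintype.card_equiv (permRestrict σ0 (B \ A) (B' \ A') (map_sdiff_eq σ0 h0A h0B)),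
      Fintype.card_equiv (permRestrict σ0 Bᶜ B'ᶜ (map_compl_eq σ0 h0B))]
    rw [Fintype.card_coe, Fintype.card_coe, Fintype.card_coe]
    rw [Finset.card_sdiff_of_subset hAB, Finset.card_compl, Fintype.card_fin]
  calc S.card = Fintype.card {σ // σ ∈ S} := (Fintype.card_coe S).symm
    _ ≤ Fintype.card (E1 × E2 × E3) := Fintype.card_le_of_injective Φ hΦinj
    _ = _ := hcards

/-- Key bound: any comparable pair other than `(∅, univ)` lies in a common chain
for at most `n! / (n/2 + 1)` permuted copies of the decomposition. -/
lemma key_bound {n : ℕ} (rep : Finset (Fin n) → Finset (Fin n))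
    (hchain : ∀ A B : Finset (Fin n), rep A = rep B → A ⊆ B ∨ B ⊆ A)
    (hrcard : ∀ A : Finset (Fin n), (rep A).card = n / 2)
    (A B : Finset (Fin n)) (hAB : A ⊂ B) (hexc : ¬(A = ∅ ∧ B = Finset.univ)) :
    (n / 2 + 1) * (Finset.univ.filter fun σ : Equiv.Perm (Fin n) =>
      rep (A.map σ.toEmbedding) = rep (B.map σ.toEmbedding)).card ≤ n ! := by
  classical
  set a := A.card with ha
  set b := B.card with hb
  have hab : a < b := Finset.card_lt_card hAB
  have hbn : b ≤ n := by simpa using Finset.card_le_univ B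
  set S := Finset.univ.filter fun σ : Equiv.Perm (Fin n) =>
      rep (A.map σ.toEmbedding) = rep (B.map σ.toEmbedding) with hSdef
  set Ψ := fun σ : Equiv.Perm (Fin n) => (A.map σ.toEmbedding, B.map σ.toEmbedding) with hPsi
  set FB := a ! * ((b - a)! * ((n - b)!)) with hFB
  have hfiber : ∀ q ∈ S.image Ψ, (S.filter fun σ => Ψ σ = q).card ≤ FB := by
    intro q _
    have hsub : (S.filter fun σ => Ψ σ = q) ⊆
        Finset.univ.filter (fun σ : Equiv.Perm (Fin n) =>
          A.map σ.toEmbedding = q.1 ∧ B.map σ.toEmbedding = q.2) := by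
      intro σ hσ
      obtain ⟨_, hq⟩ := Finset.mem_filter.1 hσ
      exact Finset.mem_filter.2 ⟨Finset.mem_univ _, by
        rw [hPsi] at hq
        exact ⟨congrArg Prod.fst hq, congrArg Prod.snd hq⟩⟩
    exact (Finset.card_le_card hsub).trans (perm_flag_count A B q.1 q.2 hAB.subset)
  have himg : S.card ≤ FB * (S.image Ψ).card := Finset.card_le_mul_card_image S FB hfiber
  set D := ((Finset.powersetCard a (Finset.univ : Finset (Fin n))) ×ˢ
      (Finset.powersetCard b (Finset.univ : Finset (Fin n)))).filter
      (fun q => rep q.1 = rep q.2) with hD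
  have hsubD : S.image Ψ ⊆ D := by
    intro q hq
    obtain ⟨σ, hσ, rfl⟩ := Finset.mem_image.1 hq
    obtain ⟨_, hrep⟩ := Finset.mem_filter.1 hσ
    refine Finset.mem_filter.2 ⟨Finset.mem_product.2 ⟨?_, ?_⟩, hrep⟩
    · exact Finset.mem_powersetCard_univ.2 (by rw [Finset.card_map])
    · exact Finset.mem_powersetCard_univ.2 (by rw [Finset.card_map])
  have hDinj : ∀ q ∈ D, ∀ q' ∈ D, q.1 = q'.1 → q = q' := by
    intro q hq q' hq' h1
    obtain ⟨hqm, hqr⟩ := Finset.mem_filter.1 hq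
    obtain ⟨hq'm, hq'r⟩ := Finset.mem_filter.1 hq'
    have hcb : q.2.card = q'.2.card := by
      rw [Finset.mem_powersetCard_univ.1 (Finset.mem_product.1 hqm).2,
        Finset.mem_powersetCard_univ.1 (Finset.mem_product.1 hq'm).2]
    have : rep q.2 = rep q'.2 := by rw [← hqr, ← hq'r, h1]
    have heq : q.2 = q'.2 := by
      rcases hchain _ _ this with h | h
      · exact Finset.eq_of_subset_of_card_le h (le_of_eq hcb.symm)
      · exact (Finset.eq_of_subset_of_card_le h (le_of_eq hcb)).symm
    exact Prod.ext h1 heq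
  have hD1 : D.card ≤ n.choose a := by
    have : D.card ≤ (Finset.powersetCard a (Finset.univ : Finset (Fin n))).card := by
      apply Finset.card_le_card_of_injOn Prod.fst
      · intro q hq
        exact (Finset.mem_product.1 (Finset.mem_filter.1 hq).1).1
      · intro q hq q' hq' h
        exact hDinj q hq q' hq' h
    rwa [Finset.card_powersetCard, Finset.card_univ, Fintype.card_fin] at this
  have hD2 : D.card ≤ n.choose b := by
    have : D.card ≤ (Finset.powersetCard b (Finset.univ : Finset (Fin n))).card := by
      apply Finset.card_le_card_of_injOn Prod.snd
      · intro q hq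
        exact (Finset.mem_product.1 (Finset.mem_filter.1 hq).1).2
      · intro q hq q' hq' h
        -- symmetric: second components equal ⇒ first equal
        obtain ⟨hqm, hqr⟩ := Finset.mem_filter.1 hq
        obtain ⟨hq'm, hq'r⟩ := Finset.mem_filter.1 hq'
        have hca : q.1.card = q'.1.card := by
          rw [Finset.mem_powersetCard_univ.1 (Finset.mem_product.1 hqm).1,
            Finset.mem_powersetCard_univ.1 (Finset.mem_product.1 hq'm).1]
        have : rep q.1 = rep q'.1 := by rw [hqr, hq'r, h]
        have heq : q.1 = q'.1 := by
          rcases hchain _ _ this with h' | h'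
          · exact Finset.eq_of_subset_of_card_le h' (le_of_eq hca.symm)
          · exact (Finset.eq_of_subset_of_card_le h' (le_of_eq hca)).symm
        exact Prod.ext heq h
    rwa [Finset.card_powersetCard, Finset.card_univ, Fintype.card_fin] at this
  by_cases hcase : a + b ≤ n
  · -- use the bound via level a
    have hblt : b < n := by
      rcases Nat.lt_or_ge b n with h | h
      · exact h
      · exfalso
        have hbn' : b = n := le_antisymm hbn h
        have ha0 : a = 0 := by omega
        refine hexc ⟨Finset.card_eq_zero.1 (by omega), (Finset.card_eq_iff_eq_univ B).1 ?_⟩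
        rw [Fintype.card_fin]
        omega
    have hc : n / 2 + 1 ≤ (n - a).choose (b - a) := by
      have h1 : n / 2 + 1 ≤ n - a := by omega
      exact h1.trans (choose_lb (n - a) (b - a) (by omega) (by omega))
    have e1 : (n - a).choose (b - a) * (b - a)! * ((n - b)!) = (n - a)! := by
      have := Nat.choose_mul_factorial_mul_factorial (show b - a ≤ n - a by omega)
      rwa [show n - a - (b - a) = n - b by omega] at this
    have e2 : n.choose a * a ! * ((n - a)!) = n ! :=
      Nat.choose_mul_factorial_mul_factorial (by omega)
    have hS2 : S.card ≤ FB * n.choose a :=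
      himg.trans (Nat.mul_le_mul_left FB ((Finset.card_le_card hsubD).trans hD1))
    calc (n / 2 + 1) * S.card ≤ (n / 2 + 1) * (FB * n.choose a) :=
          Nat.mul_le_mul_left _ hS2
      _ ≤ (n - a).choose (b - a) * (FB * n.choose a) := Nat.mul_le_mul_right _ hc
      _ = n ! := by rw [← e2, ← e1, hFB]; ring
  · -- use the bound via level b
    have ha1 : 1 ≤ a := by omega
    have hc : n / 2 + 1 ≤ b.choose a := by
      have h1 : n / 2 + 1 ≤ b := by omega
      exact h1.trans (choose_lb b a ha1 hab)
    have e1 : b.choose a * a ! * ((b - a)!) = b ! :=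
      Nat.choose_mul_factorial_mul_factorial (le_of_lt hab)
    have e2 : n.choose b * b ! * ((n - b)!) = n ! :=
      Nat.choose_mul_factorial_mul_factorial hbn
    have hS2 : S.card ≤ FB * n.choose b :=
      himg.trans (Nat.mul_le_mul_left FB ((Finset.card_le_card hsubD).trans hD2))
    calc (n / 2 + 1) * S.card ≤ (n / 2 + 1) * (FB * n.choose b) :=
          Nat.mul_le_mul_left _ hS2
      _ ≤ b.choose a * (FB * n.choose b) := Nat.mul_le_mul_right _ hc
      _ = n ! := by rw [← e2, ← e1, hFB]; ring

/-- The supersaturation count when `univ ∉ F`. -/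
lemma count_noUniv {n x : ℕ} (F : Finset (Finset (Fin n)))
    (hu : (Finset.univ : Finset (Fin n)) ∉ F)
    (hF : F.card = x + n.choose (n / 2)) :
    x * (n / 2 + 1) ≤ ((F ×ˢ F).filter fun p => p.1 ⊂ p.2).card := by
  classical
  obtain ⟨rep, hchain, hrcard⟩ := exists_rep n
  set P := (F ×ˢ F).filter fun p => p.1 ⊂ p.2 with hP
  have hper : ∀ σ : Equiv.Perm (Fin n),
      x ≤ (P.filter fun p =>
        rep (p.1.map σ.toEmbedding) = rep (p.2.map σ.toEmbedding)).card := by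
    intro σ
    have hchain' : ∀ A B : Finset (Fin n),
        rep (A.map σ.toEmbedding) = rep (B.map σ.toEmbedding) → A ⊆ B ∨ B ⊆ A := by
      intro A B h
      rcases hchain _ _ h with h' | h'
      · exact Or.inl (Finset.map_subset_map.1 h')
      · exact Or.inr (Finset.map_subset_map.1 h')
    have hcc := chain_count' n (fun A => rep (A.map σ.toEmbedding)) hchain'
      (fun A => hrcard _) F
    rw [hP, Finset.filter_filter]
    omega
  have hsum : n ! * x ≤ ∑ p ∈ P, (Finset.univ.filter fun σ : Equiv.Perm (Fin n) =>
      rep (p.1.map σ.toEmbedding) = rep (p.2.map σ.toEmbedding)).card := by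
    have h1 : n ! * x ≤ ∑ σ : Equiv.Perm (Fin n),
        (P.filter fun p =>
          rep (p.1.map σ.toEmbedding) = rep (p.2.map σ.toEmbedding)).card := by
      calc n ! * x = ∑ _σ : Equiv.Perm (Fin n), x := by
            rw [Finset.sum_const, Finset.card_univ, Fintype.card_perm, Fintype.card_fin,
              smul_eq_mul]
        _ ≤ _ := Finset.sum_le_sum fun σ _ => hper σ
    refine h1.trans (le_of_eq ?_)
    simp_rw [Finset.card_filter]
    exact Finset.sum_comm
  have hkey : ∀ p ∈ P, (n / 2 + 1) * (Finset.univ.filter fun σ : Equiv.Perm (Fin n) =>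
      rep (p.1.map σ.toEmbedding) = rep (p.2.map σ.toEmbedding)).card ≤ n ! := by
    intro p hp
    obtain ⟨hpm, hpss⟩ := Finset.mem_filter.1 hp
    have hp2 : p.2 ∈ F := (Finset.mem_product.1 hpm).2
    refine key_bound rep hchain hrcard p.1 p.2 hpss fun ⟨_, h2⟩ => ?_
    exact hu (h2 ▸ hp2)
  have htotal : n ! * ((n / 2 + 1) * x) ≤ n ! * P.card := by
    calc n ! * ((n / 2 + 1) * x) = (n / 2 + 1) * (n ! * x) := by ring
      _ ≤ (n / 2 + 1) * ∑ p ∈ P, (Finset.univ.filter fun σ : Equiv.Perm (Fin n) =>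
            rep (p.1.map σ.toEmbedding) = rep (p.2.map σ.toEmbedding)).card :=
          Nat.mul_le_mul_left _ hsum
      _ = ∑ p ∈ P, (n / 2 + 1) * (Finset.univ.filter fun σ : Equiv.Perm (Fin n) =>
            rep (p.1.map σ.toEmbedding) = rep (p.2.map σ.toEmbedding)).card :=
          Finset.mul_sum ..
      _ ≤ ∑ _p ∈ P, n ! := Finset.sum_le_sum hkey
      _ = n ! * P.card := by rw [Finset.sum_const, smul_eq_mul, mul_comm]
  have := Nat.le_of_mul_le_mul_left htotal (Nat.factorial_pos n)
  rw [Nat.mul_comm]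
  exact this

/-- Supersaturation extension of Sperner's theorem (case k = 2). -/
theorem supersaturation_pairs (n x : ℕ) (F : Finset (Finset (Fin n)))
    (hF : F.card = x + n.choose (n / 2)) :
    x * (n / 2 + 1) ≤ ((F ×ˢ F).filter fun p => p.1 ⊂ p.2).card := by
  classical
  by_cases hu : (Finset.univ : Finset (Fin n)) ∈ F
  · rcases Nat.eq_zero_or_pos x with rfl | hx
    · simp
    obtain ⟨y, rfl⟩ : ∃ y, x = y + 1 := ⟨x - 1, by omega⟩
    set F' := F.erase Finset.univ with hF'def
    have hu' : (Finset.univ : Finset (Fin n)) ∉ F' := Finset.notMem_erase _ _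
    have hF'card : F'.card = y + n.choose (n / 2) := by
      rw [hF'def, Finset.card_erase_of_mem hu]
      omega
    have h1 := count_noUniv F' hu' hF'card
    set P := (F ×ˢ F).filter fun p => p.1 ⊂ p.2 with hP
    set P' := (F' ×ˢ F').filter fun p => p.1 ⊂ p.2 with hP'
    set Q := F'.image fun A => (A, (Finset.univ : Finset (Fin n))) with hQ
    have hQP : Q ⊆ P := by
      intro q hq
      obtain ⟨A, hA, rfl⟩ := Finset.mem_image.1 hq
      obtain ⟨hAne, hAF⟩ := Finset.mem_erase.1 hA
      exact Finset.mem_filter.2 ⟨Finset.mem_product.2 ⟨hAF, hu⟩,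
        Finset.ssubset_univ_iff.2 hAne⟩
    have hP'P : P' ⊆ P := by
      intro q hq
      obtain ⟨hqm, hqss⟩ := Finset.mem_filter.1 hq
      obtain ⟨h1', h2'⟩ := Finset.mem_product.1 hqm
      exact Finset.mem_filter.2 ⟨Finset.mem_product.2
        ⟨Finset.erase_subset _ _ h1', Finset.erase_subset _ _ h2'⟩, hqss⟩
    have hdisj : Disjoint P' Q := by
      rw [Finset.disjoint_left]
      intro q hq hq'
      obtain ⟨A, hA, rfl⟩ := Finset.mem_image.1 hq'
      have h2 := (Finset.mem_product.1 (Finset.mem_filter.1 hq).1).2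
      exact hu' h2
    have hQcard : Q.card = F'.card :=
      Finset.card_image_of_injective _ (fun A B h => congrArg Prod.fst h)
    have hunion : P'.card + Q.card ≤ P.card := by
      rw [← Finset.card_union_of_disjoint hdisj]
      exact Finset.card_le_card (Finset.union_subset hP'P hQP)
    have hNge : n / 2 + 1 ≤ n.choose (n / 2) := by
      rcases Nat.eq_zero_or_pos (n / 2) with h0 | h0
      · rw [h0]; simp
      · have hn2 : n / 2 < n := by omega
        have := choose_lb n (n / 2) h0 hn2
        omega
    have hfin : (y + 1) * (n / 2 + 1) ≤ P'.card + Q.card := by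
      have : n / 2 + 1 ≤ Q.card := by omega
      calc (y + 1) * (n / 2 + 1) = y * (n / 2 + 1) + (n / 2 + 1) := by ring
        _ ≤ P'.card + Q.card := Nat.add_le_add h1 this
    exact hfin.trans hunion
  · exact count_noUniv F hu hF
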